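/- Let f and g be analytic functions on the polydisc D_{ρ₁,...,ρ_N} ⊂ ℂ^N, let s ∈ [1,∞)^N, let α, β ∈ [1,∞)^N ∪ {0}, and let 0 < r < min(ρ₁,...,ρ_N). Then ‖f·g‖_{α+β,r,s} ≤ ‖f‖_{α,r,s} · ‖g‖_{β,r,s}. -/

import Mathlib

/-- Generalized binomial coefficient `binom(α+j−1, j) = (∏_{i=0}^{j−1}(α+i))/j!`. -/
noncomputable def genBinom (α : ℝ) (j : ℕ) : ℝ :=
  (∏ i ∈ Finset.range j, (α + i)) / (j.factorial : ℝ)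

/-- Taylor coefficients of an analytic function on the polydisc `D_{ρ₁,...,ρ_N}`. -/
def AnalyticCoeffs {N : ℕ} (ρ : Fin N → ℝ) (f : (Fin N → ℕ) → ℂ) : Prop :=
  ∀ r : Fin N → ℝ, (∀ d, 0 ≤ r d) → (∀ d, r d < ρ d) →
    Summable fun J : Fin N → ℕ => ‖f J‖ * ∏ d, r d ^ J d

/-- The majorization set defining the modified Nagumo norm for `α ≠ 0`. -/
def nagumoSet {N : ℕ} (f : (Fin N → ℕ) → ℂ) (α : Fin N → ℝ) (r : ℝ) (s : Fin N → ℝ) :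
    Set ℝ :=
  {A : ℝ | 0 ≤ A ∧ ∀ J : Fin N → ℕ,
    ‖f J‖ ≤ A * ∏ d, r ^ (-(α d)) * genBinom (α d) (J d) ^ s d * (r ^ J d)⁻¹}

open Classical in
/-- The modified Nagumo norm `‖f‖_{α,r,s}`. -/
noncomputable def nagumoNorm {N : ℕ} (f : (Fin N → ℕ) → ℂ) (α : Fin N → ℝ) (r : ℝ)
    (s : Fin N → ℝ) : ℝ :=
  if α = 0 then ∑' J : Fin N → ℕ, ‖f J‖ * r ^ (∑ d, J d)
  else sInf (nagumoSet f α r s)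

/-- Cauchy product of Taylor coefficient families: the coefficients of `f·g`. -/
noncomputable def coeffMul {N : ℕ} (f g : (Fin N → ℕ) → ℂ) : (Fin N → ℕ) → ℂ :=
  fun J => ∑ K ∈ Finset.Iic J, f K * g (J - K)

open Finset Real

/-! ### Auxiliary lemmas about `genBinom` -/

lemma genBinom_zero' (α : ℝ) : genBinom α 0 = 1 := by simp [genBinom]

lemma genBinom_succ_mul (α : ℝ) (j : ℕ) :
    ((j : ℝ) + 1) * genBinom α (j + 1) = (α + j) * genBinom α j := by
  have h1 : (j.factorial : ℝ) ≠ 0 := Nat.cast_ne_zero.2 j.factorial_ne_zero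
  have h2 : ((j : ℝ) + 1) ≠ 0 := by positivity
  simp only [genBinom, prod_range_succ, Nat.factorial_succ, Nat.cast_mul, Nat.cast_add,
    Nat.cast_one]
  field_simp

lemma genBinom_nonneg {α : ℝ} (hα : 0 ≤ α) (j : ℕ) : 0 ≤ genBinom α j := by
  apply div_nonneg _ (Nat.cast_nonneg _)
  exact Finset.prod_nonneg fun i _ => by positivity

lemma genBinom_pos {α : ℝ} (hα : 0 < α) (j : ℕ) : 0 < genBinom α j := by
  apply div_pos _ (by exact_mod_cast j.factorial_pos)
  exact Finset.prod_pos fun i _ => by positivity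

lemma one_le_genBinom {α : ℝ} (hα : 1 ≤ α) (j : ℕ) : 1 ≤ genBinom α j := by
  rw [genBinom, le_div_iff₀ (by exact_mod_cast j.factorial_pos), one_mul]
  calc (j.factorial : ℝ) = ∏ i ∈ range j, ((i : ℝ) + 1) := by
        rw [← Finset.prod_range_add_one_eq_factorial]; push_cast
        exact Finset.prod_congr rfl fun i _ => rfl
    _ ≤ ∏ i ∈ range j, (α + i) := by
        apply Finset.prod_le_prod (fun i _ => by positivity) (fun i _ => by linarith)

lemma genBinom_mono {α : ℝ} (hα : 1 ≤ α) : Monotone (genBinom α) := by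
  apply monotone_nat_of_le_succ
  intro j
  have h := genBinom_succ_mul α j
  have h0 := genBinom_nonneg (by linarith : (0:ℝ) ≤ α) j
  nlinarith [genBinom_nonneg (by linarith : (0:ℝ) ≤ α) (j+1)]

lemma genBinom_vandermonde (α β : ℝ) : ∀ j : ℕ,
    ∑ k ∈ range (j + 1), genBinom α k * genBinom β (j - k) = genBinom (α + β) j := by
  intro j
  induction j with
  | zero => simp [genBinom]
  | succ j ih =>
    have h2 : ((j : ℝ) + 1) ≠ 0 := by positivity
    apply mul_left_cancel₀ h2
    have key : ((j:ℝ) + 1) * ∑ k ∈ range (j + 1 + 1), genBinom α k * genBinom β (j + 1 - k)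
        = (α + β + j) * ∑ k ∈ range (j + 1), genBinom α k * genBinom β (j - k) := by
      rw [Finset.mul_sum]
      have split : ∀ k ∈ range (j + 1 + 1),
          ((j:ℝ) + 1) * (genBinom α k * genBinom β (j + 1 - k))
          = (k : ℝ) * genBinom α k * genBinom β (j + 1 - k)
            + ((j + 1 - k : ℕ) : ℝ) * genBinom β (j + 1 - k) * genBinom α k := by
        intro k hk
        have hk' : k ≤ j + 1 := Finset.mem_range_succ_iff.mp hk
        have hcast : ((k : ℝ) + ((j + 1 - k : ℕ) : ℝ)) = (j : ℝ) + 1 := by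
          have h := Nat.add_sub_cancel' hk'
          exact_mod_cast congrArg (Nat.cast : ℕ → ℝ) h
        linear_combination (-(genBinom α k * genBinom β (j + 1 - k))) * hcast
      rw [Finset.sum_congr rfl split, Finset.sum_add_distrib]
      have first : ∑ k ∈ range (j + 1 + 1),
          (k : ℝ) * genBinom α k * genBinom β (j + 1 - k)
          = ∑ k ∈ range (j + 1), (α + k) * genBinom α k * genBinom β (j - k) := by
        rw [Finset.sum_range_succ']
        simp only [Nat.cast_zero, zero_mul, add_zero, Nat.cast_add, Nat.cast_one]
        apply Finset.sum_congr rfl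
        intro k hk
        have h := genBinom_succ_mul α k
        have heq : j + 1 - (k + 1) = j - k := by omega
        rw [heq]
        push_cast
        linear_combination genBinom β (j - k) * h
      have second : ∑ k ∈ range (j + 1 + 1),
          ((j + 1 - k : ℕ) : ℝ) * genBinom β (j + 1 - k) * genBinom α k
          = ∑ k ∈ range (j + 1), (β + ((j - k : ℕ) : ℝ)) * genBinom β (j - k) * genBinom α k := by
        rw [Finset.sum_range_succ]
        simp only [Nat.sub_self, Nat.cast_zero, zero_mul]
        rw [add_zero]
        apply Finset.sum_congr rfl
        intro k hk
        have hk' : k ≤ j := Finset.mem_range_succ_iff.mp hk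
        have h1 : j + 1 - k = (j - k) + 1 := by omega
        rw [h1]
        have h := genBinom_succ_mul β (j - k)
        push_cast
        linear_combination genBinom α k * h
      rw [first, second, ← Finset.sum_add_distrib, Finset.mul_sum]
      apply Finset.sum_congr rfl
      intro k hk
      have hk' : k ≤ j := Finset.mem_range_succ_iff.mp hk
      have hcast : ((k : ℝ) + ((j - k : ℕ) : ℝ)) = (j : ℝ) := by
        have h := Nat.add_sub_cancel' hk'
        exact_mod_cast congrArg (Nat.cast : ℕ → ℝ) h
      linear_combination genBinom α k * genBinom β (j - k) * hcast
    rw [key, ih, genBinom_succ_mul (α + β) j]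

/-! ### rpow sum lemmas -/

lemma sum_rpow_le_rpow {n : ℕ} {a : ℕ → ℝ} {S s : ℝ} (ha : ∀ k ∈ range n, 0 ≤ a k)
    (hS : ∑ k ∈ range n, a k = S) (hs : 1 ≤ s) (hS0 : 0 < S) :
    ∑ k ∈ range n, a k ^ s ≤ S ^ s := by
  have h1 : ∀ k ∈ range n, a k ^ s ≤ a k * S ^ (s - 1) := by
    intro k hk
    rcases eq_or_lt_of_le (ha k hk) with h | h
    · rw [← h, Real.zero_rpow (by linarith), zero_mul]
    · have hak : a k ≤ S := hS ▸ Finset.single_le_sum ha hk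
      calc a k ^ s = a k * a k ^ (s - 1) := by
            rw [show s = 1 + (s - 1) by ring, Real.rpow_add h, Real.rpow_one]; ring_nf
        _ ≤ a k * S ^ (s - 1) :=
            mul_le_mul_of_nonneg_left (Real.rpow_le_rpow h.le hak (by linarith)) h.le
  calc ∑ k ∈ range n, a k ^ s ≤ ∑ k ∈ range n, a k * S ^ (s - 1) := Finset.sum_le_sum h1
    _ = S * S ^ (s - 1) := by rw [← Finset.sum_mul, hS]
    _ = S ^ s := by
        nth_rewrite 1 [← Real.rpow_one S]
        rw [← Real.rpow_add hS0]; ring_nf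

lemma genBinom_conv_rpow_le {α β s : ℝ} (hα : 1 ≤ α) (hβ : 1 ≤ β) (hs : 1 ≤ s) (j : ℕ) :
    ∑ k ∈ range (j + 1), (genBinom α k * genBinom β (j - k)) ^ s
      ≤ genBinom (α + β) j ^ s := by
  apply sum_rpow_le_rpow
    (fun k _ => mul_nonneg (genBinom_nonneg (by linarith) k) (genBinom_nonneg (by linarith) _))
    (genBinom_vandermonde α β j) hs (genBinom_pos (by linarith) j)

/-! ### one-dimensional Nagumo factor lemmas -/

lemma nagumo_fac_pos {α s r : ℝ} (hα : 0 < α) (hr : 0 < r) (j : ℕ) :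
    0 < r ^ (-α) * genBinom α j ^ s * (r ^ j)⁻¹ :=
  mul_pos (mul_pos (Real.rpow_pos_of_pos hr _)
    (Real.rpow_pos_of_pos (genBinom_pos hα j) _)) (inv_pos.2 (pow_pos hr _))

lemma nagumo_dim1 {α β s r : ℝ} (hα : 1 ≤ α) (hβ : 1 ≤ β) (hs : 1 ≤ s) (hr : 0 < r) (j : ℕ) :
    ∑ k ∈ range (j + 1), (r ^ (-α) * genBinom α k ^ s * (r ^ k)⁻¹) *
      (r ^ (-β) * genBinom β (j - k) ^ s * (r ^ (j - k))⁻¹)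
    ≤ r ^ (-(α + β)) * genBinom (α + β) j ^ s * (r ^ j)⁻¹ := by
  have step : ∀ k ∈ range (j + 1),
      (r ^ (-α) * genBinom α k ^ s * (r ^ k)⁻¹) *
        (r ^ (-β) * genBinom β (j - k) ^ s * (r ^ (j - k))⁻¹)
      = (r ^ (-α) * r ^ (-β) * (r ^ j)⁻¹) * (genBinom α k * genBinom β (j - k)) ^ s := by
    intro k hk
    have hk' : k ≤ j := Finset.mem_range_succ_iff.mp hk
    rw [Real.mul_rpow (genBinom_nonneg (by linarith) k) (genBinom_nonneg (by linarith) _)]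
    have hpow : (r ^ k)⁻¹ * (r ^ (j - k))⁻¹ = (r ^ j)⁻¹ := by
      rw [← mul_inv, ← pow_add, Nat.add_sub_cancel' hk']
    linear_combination (r ^ (-α) * r ^ (-β) * genBinom α k ^ s * genBinom β (j - k) ^ s) * hpow
  rw [Finset.sum_congr rfl step, ← Finset.mul_sum]
  have h1 : (r ^ (-α) * r ^ (-β) * (r ^ j)⁻¹) * ∑ k ∈ range (j + 1),
      (genBinom α k * genBinom β (j - k)) ^ s
      ≤ (r ^ (-α) * r ^ (-β) * (r ^ j)⁻¹) * genBinom (α + β) j ^ s := by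
    apply mul_le_mul_of_nonneg_left (genBinom_conv_rpow_le hα hβ hs j)
    have := Real.rpow_pos_of_pos hr (-α)
    have := Real.rpow_pos_of_pos hr (-β)
    positivity
  calc _ ≤ (r ^ (-α) * r ^ (-β) * (r ^ j)⁻¹) * genBinom (α + β) j ^ s := h1
    _ = r ^ (-(α + β)) * genBinom (α + β) j ^ s * (r ^ j)⁻¹ := by
        rw [show -(α + β) = -α + -β by ring, Real.rpow_add hr]; ring

lemma nagumo_dim1_zero {α s r : ℝ} (hα : 1 ≤ α) (hs0 : 0 ≤ s) (hr : 0 < r) {k j : ℕ}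
    (hk : k ≤ j) :
    r ^ (-α) * genBinom α k ^ s * (r ^ k)⁻¹
      ≤ (r ^ (-α) * genBinom α j ^ s * (r ^ j)⁻¹) * r ^ (j - k) := by
  have hB : genBinom α k ^ s ≤ genBinom α j ^ s :=
    Real.rpow_le_rpow (genBinom_nonneg (by linarith) k) (genBinom_mono hα hk) hs0
  have hpow : (r ^ k)⁻¹ = (r ^ j)⁻¹ * r ^ (j - k) := by
    have hrj : (r : ℝ) ^ j = r ^ k * r ^ (j - k) := by
      rw [← pow_add, Nat.add_sub_cancel' hk]
    rw [hrj, mul_inv, mul_assoc, inv_mul_cancel₀ (pow_ne_zero _ hr.ne'), mul_one]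
  rw [hpow]
  calc r ^ (-α) * genBinom α k ^ s * ((r ^ j)⁻¹ * r ^ (j - k))
      = genBinom α k ^ s * (r ^ (-α) * (r ^ j)⁻¹ * r ^ (j - k)) := by ring
    _ ≤ genBinom α j ^ s * (r ^ (-α) * (r ^ j)⁻¹ * r ^ (j - k)) := by
        apply mul_le_mul_of_nonneg_right hB
        have := Real.rpow_pos_of_pos hr (-α)
        positivity
    _ = r ^ (-α) * genBinom α j ^ s * (r ^ j)⁻¹ * r ^ (j - k) := by ring

/-! ### Pi-type interval lemmas -/

lemma Iic_pi_eq {N : ℕ} (J : Fin N → ℕ) :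
    Finset.Iic J = Fintype.piFinset fun d => Finset.Iic (J d) := by
  ext K; simp [Fintype.mem_piFinset, Pi.le_def]

lemma Iic_nat_eq_range (j : ℕ) : Finset.Iic j = Finset.range (j + 1) := by
  ext k; simp [Nat.lt_succ_iff]

lemma pi_sub_inv {N : ℕ} (J : Fin N → ℕ) :
    ∀ K ∈ Finset.Iic J, J - (J - K) = K := by
  intro K hK
  funext d
  have h2 : K d ≤ J d := Pi.le_def.mp (Finset.mem_Iic.mp hK) d
  simp only [Pi.sub_apply]
  omega

lemma sum_Iic_reflect {N : ℕ} {M : Type*} [AddCommMonoid M] (J : Fin N → ℕ)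
    (h : (Fin N → ℕ) → (Fin N → ℕ) → M) :
    ∑ K ∈ Finset.Iic J, h K (J - K) = ∑ K ∈ Finset.Iic J, h (J - K) K := by
  apply Finset.sum_nbij' (i := fun K => J - K) (j := fun K => J - K)
  · intro K hK; simp only [Finset.mem_Iic] at *; intro d; exact tsub_le_self
  · intro K hK; simp only [Finset.mem_Iic] at *; intro d; exact tsub_le_self
  · exact pi_sub_inv J
  · exact pi_sub_inv J
  · intro K hK; rw [pi_sub_inv J K hK]

/-! ### Nagumo set lemmas -/

lemma nagumoSet_nonempty {N : ℕ} {f : (Fin N → ℕ) → ℂ} {α s : Fin N → ℝ} {r : ℝ}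
    (hα : ∀ d, 1 ≤ α d) (hs : ∀ d, 1 ≤ s d) (hr : 0 < r)
    (hsum : Summable fun J : Fin N → ℕ => ‖f J‖ * ∏ d, r ^ J d) :
    (nagumoSet f α r s).Nonempty := by
  set T : ℝ := ∑' J : Fin N → ℕ, ‖f J‖ * ∏ d, r ^ J d with hT
  have hT0 : 0 ≤ T := tsum_nonneg fun J => by positivity
  refine ⟨T * ∏ d, r ^ (α d), mul_nonneg hT0
    (Finset.prod_nonneg fun d _ => (Real.rpow_pos_of_pos hr _).le), fun J => ?_⟩
  have hP : (0 : ℝ) < ∏ d, r ^ J d := Finset.prod_pos fun d _ => pow_pos hr _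
  have h1 : ‖f J‖ * ∏ d, r ^ J d ≤ T := hsum.le_tsum J fun _ _ => by positivity
  have hstep1 : ‖f J‖ ≤ T * (∏ d, r ^ J d)⁻¹ := by
    rw [← div_eq_mul_inv, le_div_iff₀ hP]; exact h1
  have hkey : (T * ∏ d, r ^ (α d)) *
      ∏ d, r ^ (-(α d)) * genBinom (α d) (J d) ^ s d * (r ^ J d)⁻¹
      = T * ∏ d, genBinom (α d) (J d) ^ s d * (r ^ J d)⁻¹ := by
    rw [mul_assoc, ← Finset.prod_mul_distrib]
    congr 1
    apply Finset.prod_congr rfl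
    intro d _
    rw [show r ^ (α d) * (r ^ (-(α d)) * genBinom (α d) (J d) ^ s d * (r ^ J d)⁻¹)
        = (r ^ (α d) * r ^ (-(α d))) * (genBinom (α d) (J d) ^ s d * (r ^ J d)⁻¹) by ring,
      ← Real.rpow_add hr, add_neg_cancel, Real.rpow_zero, one_mul]
  rw [hkey]
  calc ‖f J‖ ≤ T * (∏ d, r ^ J d)⁻¹ := hstep1
    _ = T * ∏ d, ((r : ℝ) ^ J d)⁻¹ := by rw [← Finset.prod_inv_distrib]
    _ ≤ T * ∏ d, genBinom (α d) (J d) ^ s d * (r ^ J d)⁻¹ := by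
        apply mul_le_mul_of_nonneg_left _ hT0
        apply Finset.prod_le_prod (fun d _ => by positivity)
        intro d _
        have h1' : 1 ≤ genBinom (α d) (J d) ^ s d := by
          calc (1 : ℝ) = 1 ^ s d := (Real.one_rpow _).symm
            _ ≤ genBinom (α d) (J d) ^ s d :=
              Real.rpow_le_rpow zero_le_one (one_le_genBinom (hα d) _) (by linarith [hs d])
        nlinarith [inv_pos.2 (pow_pos hr (J d))]

lemma csInf_mem_nagumoSet {N : ℕ} {f : (Fin N → ℕ) → ℂ} {α s : Fin N → ℝ} {r : ℝ}
    (hα : ∀ d, 1 ≤ α d) (hr : 0 < r) (hne : (nagumoSet f α r s).Nonempty) :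
    sInf (nagumoSet f α r s) ∈ nagumoSet f α r s := by
  constructor
  · exact le_csInf hne fun A hA => hA.1
  · intro J
    set c : ℝ := ∏ d, r ^ (-(α d)) * genBinom (α d) (J d) ^ s d * (r ^ J d)⁻¹ with hc
    have hc0 : 0 < c :=
      Finset.prod_pos fun d _ => nagumo_fac_pos (by linarith [hα d]) hr _
    have hlb : ‖f J‖ / c ≤ sInf (nagumoSet f α r s) :=
      le_csInf hne fun A hA => (div_le_iff₀ hc0).2 (hA.2 J)
    calc ‖f J‖ = (‖f J‖ / c) * c := by field_simp
      _ ≤ sInf (nagumoSet f α r s) * c := mul_le_mul_of_nonneg_right hlb hc0.le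

lemma nagumo_mixed {N : ℕ} (f g : (Fin N → ℕ) → ℂ) {α s : Fin N → ℝ} {r : ℝ} {A : ℝ}
    (hα : ∀ d, 1 ≤ α d) (hs : ∀ d, 1 ≤ s d) (hr : 0 < r)
    (hA : A ∈ nagumoSet f α r s)
    (hgsum : Summable fun J : Fin N → ℕ => ‖g J‖ * ∏ d, r ^ J d)
    (J : Fin N → ℕ) :
    ∑ K ∈ Finset.Iic J, ‖f K‖ * ‖g (J - K)‖
      ≤ (A * ∑' L : Fin N → ℕ, ‖g L‖ * ∏ d, r ^ L d) *
        ∏ d, r ^ (-(α d)) * genBinom (α d) (J d) ^ s d * (r ^ J d)⁻¹ := by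
  set T : ℝ := ∑' L : Fin N → ℕ, ‖g L‖ * ∏ d, r ^ L d with hTdef
  set Z : ℝ := ∏ d, r ^ (-(α d)) * genBinom (α d) (J d) ^ s d * (r ^ J d)⁻¹ with hZdef
  have hZ0 : 0 < Z :=
    Finset.prod_pos fun d _ => nagumo_fac_pos (by linarith [hα d]) hr _
  have step1 : ∀ K ∈ Finset.Iic J, ‖f K‖ * ‖g (J - K)‖
      ≤ (A * Z) * (‖g (J - K)‖ * ∏ d, r ^ ((J - K) d)) := by
    intro K hK
    have hKJ : K ≤ J := Finset.mem_Iic.mp hK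
    have h1 : ‖f K‖
        ≤ A * ∏ d, r ^ (-(α d)) * genBinom (α d) (K d) ^ s d * (r ^ K d)⁻¹ := hA.2 K
    have h2 : ∏ d, r ^ (-(α d)) * genBinom (α d) (K d) ^ s d * (r ^ K d)⁻¹
        ≤ ∏ d, (r ^ (-(α d)) * genBinom (α d) (J d) ^ s d * (r ^ J d)⁻¹) * r ^ (J d - K d) := by
      apply Finset.prod_le_prod
        (fun d _ => (nagumo_fac_pos (by linarith [hα d] : (0:ℝ) < α d) hr _).le)
      intro d _
      exact nagumo_dim1_zero (hα d) (by linarith [hs d]) hr (Pi.le_def.mp hKJ d)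
    have h3 : ∏ d, (r ^ (-(α d)) * genBinom (α d) (J d) ^ s d * (r ^ J d)⁻¹) * r ^ (J d - K d)
        = Z * ∏ d, r ^ ((J - K) d) := by
      rw [Finset.prod_mul_distrib, hZdef]
      simp only [Pi.sub_apply]
    have h4 : ‖f K‖ ≤ A * (Z * ∏ d, r ^ ((J - K) d)) :=
      h1.trans (mul_le_mul_of_nonneg_left (h2.trans_eq h3) hA.1)
    calc ‖f K‖ * ‖g (J - K)‖
        ≤ (A * (Z * ∏ d, r ^ ((J - K) d))) * ‖g (J - K)‖ :=
          mul_le_mul_of_nonneg_right h4 (norm_nonneg _)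
      _ = (A * Z) * (‖g (J - K)‖ * ∏ d, r ^ ((J - K) d)) := by ring
  calc ∑ K ∈ Finset.Iic J, ‖f K‖ * ‖g (J - K)‖
      ≤ ∑ K ∈ Finset.Iic J, (A * Z) * (‖g (J - K)‖ * ∏ d, r ^ ((J - K) d)) :=
        Finset.sum_le_sum step1
    _ = (A * Z) * ∑ K ∈ Finset.Iic J,
          (fun K' _ => ‖g K'‖ * ∏ d, r ^ (K' d)) (J - K) K := by
        rw [← Finset.mul_sum]
    _ = (A * Z) * ∑ K ∈ Finset.Iic J, ‖g K‖ * ∏ d, r ^ (K d) := by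
        rw [← sum_Iic_reflect J (fun K' K'' => ‖g K'‖ * ∏ d, r ^ (K' d))]
    _ ≤ (A * Z) * T := by
        apply mul_le_mul_of_nonneg_left _ (mul_nonneg hA.1 hZ0.le)
        exact hgsum.sum_le_tsum _ (fun L _ => by positivity)
    _ = (A * T) * Z := by ring

lemma double_sum_le_tsum_mul {N : ℕ} (a b : (Fin N → ℕ) → ℝ)
    (ha : ∀ J, 0 ≤ a J) (hb : ∀ J, 0 ≤ b J) (hsa : Summable a) (hsb : Summable b)
    (S : Finset (Fin N → ℕ)) :
    ∑ J ∈ S, ∑ K ∈ Finset.Iic J, a K * b (J - K) ≤ (∑' J, a J) * (∑' J, b J) := by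
  classical
  set box : Finset (Fin N → ℕ) := S.biUnion Finset.Iic with hbox
  have hsub : ((S.sigma fun J => Finset.Iic J).image
      fun x : (Σ _ : Fin N → ℕ, Fin N → ℕ) => (x.2, x.1 - x.2)) ⊆ box ×ˢ box := by
    intro p hp
    simp only [Finset.mem_image, Finset.mem_sigma] at hp
    obtain ⟨x, ⟨hx1, hx2⟩, rfl⟩ := hp
    simp only [Finset.mem_product, hbox, Finset.mem_biUnion]
    exact ⟨⟨x.1, hx1, hx2⟩, ⟨x.1, hx1, Finset.mem_Iic.2 fun d => tsub_le_self⟩⟩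
  have hinj : ∀ x ∈ S.sigma fun J => Finset.Iic J, ∀ y ∈ S.sigma fun J => Finset.Iic J,
      (fun x : (Σ _ : Fin N → ℕ, Fin N → ℕ) => (x.2, x.1 - x.2)) x
        = (fun x : (Σ _ : Fin N → ℕ, Fin N → ℕ) => (x.2, x.1 - x.2)) y → x = y := by
    intro x hx y hy hxy
    simp only [Finset.mem_sigma] at hx hy
    simp only [Prod.mk.injEq] at hxy
    obtain ⟨h1, h2⟩ := hxy
    have hx2 : x.2 ≤ x.1 := Finset.mem_Iic.mp hx.2
    have hy2 : y.2 ≤ y.1 := Finset.mem_Iic.mp hy.2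
    have hfst : x.1 = y.1 := by
      funext d
      have e1 := congrFun h1 d
      have e2 := congrFun h2 d
      have l1 := Pi.le_def.mp hx2 d
      have l2 := Pi.le_def.mp hy2 d
      simp only [Pi.sub_apply] at e2
      omega
    exact Sigma.ext hfst (heq_of_eq (by rw [← h1]))
  have e1 : ∑ J ∈ S, ∑ K ∈ Finset.Iic J, a K * b (J - K)
      = ∑ x ∈ S.sigma fun J => Finset.Iic J,
          (fun x : (Σ _ : Fin N → ℕ, Fin N → ℕ) => a x.2 * b (x.1 - x.2)) x :=
    Finset.sum_sigma' S (fun J => Finset.Iic J) (fun J K => a K * b (J - K))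
  have e2 : ∑ x ∈ S.sigma fun J => Finset.Iic J,
      (fun x : (Σ _ : Fin N → ℕ, Fin N → ℕ) => a x.2 * b (x.1 - x.2)) x
      = ∑ p ∈ (S.sigma fun J => Finset.Iic J).image
          (fun x : (Σ _ : Fin N → ℕ, Fin N → ℕ) => (x.2, x.1 - x.2)),
          a p.1 * b p.2 := by
    rw [Finset.sum_image hinj]
  have e3 : ∑ p ∈ (S.sigma fun J => Finset.Iic J).image
        (fun x : (Σ _ : Fin N → ℕ, Fin N → ℕ) => (x.2, x.1 - x.2)), a p.1 * b p.2
      ≤ ∑ p ∈ box ×ˢ box, a p.1 * b p.2 :=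
    Finset.sum_le_sum_of_subset_of_nonneg hsub fun p _ _ => mul_nonneg (ha _) (hb _)
  have e4 : ∑ p ∈ box ×ˢ box, a p.1 * b p.2 = (∑ K ∈ box, a K) * (∑ L ∈ box, b L) := by
    rw [Finset.sum_mul_sum]
    exact (Finset.sum_product _ _ _)
  have e5 : (∑ K ∈ box, a K) * (∑ L ∈ box, b L) ≤ (∑' J, a J) * (∑' J, b J) :=
    mul_le_mul (hsa.sum_le_tsum _ (fun _ _ => ha _)) (hsb.sum_le_tsum _ (fun _ _ => hb _))
      (Finset.sum_nonneg fun _ _ => hb _) (tsum_nonneg ha)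
  rw [e1, e2]
  exact le_trans e3 (le_trans (le_of_eq e4) e5)

lemma coeffMul_abs_le {N : ℕ} (f g : (Fin N → ℕ) → ℂ) (J : Fin N → ℕ) :
    ‖coeffMul f g J‖
      ≤ ∑ K ∈ Finset.Iic J, ‖f K‖ * ‖g (J - K)‖ := by
  refine (norm_sum_le _ _).trans_eq ?_
  exact Finset.sum_congr rfl fun K _ => norm_mul _ _

/-- For `f, g` analytic on `D_{ρ₁,...,ρ_N}`, `s ∈ [1,∞)^N`, `α, β ∈ [1,∞)^N ∪ {0}` and
`0 < r < min(ρ₁,...,ρ_N)`: `‖f·g‖_{α+β,r,s} ≤ ‖f‖_{α,r,s} · ‖g‖_{β,r,s}`. -/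
theorem nagumoNorm_mul (N : ℕ) (ρ : Fin N → ℝ) (hρ : ∀ d, 0 < ρ d)
    (f g : (Fin N → ℕ) → ℂ) (hf : AnalyticCoeffs ρ f) (hg : AnalyticCoeffs ρ g)
    (s : Fin N → ℝ) (hs : ∀ d, 1 ≤ s d)
    (α : Fin N → ℝ) (hα : (∀ d, 1 ≤ α d) ∨ α = 0)
    (β : Fin N → ℝ) (hβ : (∀ d, 1 ≤ β d) ∨ β = 0)
    (r : ℝ) (hr : 0 < r) (hrρ : ∀ d, r < ρ d) :
    nagumoNorm (coeffMul f g) (α + β) r s ≤ nagumoNorm f α r s * nagumoNorm g β r s := by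
  classical
  have hfs : Summable fun J : Fin N → ℕ => ‖f J‖ * ∏ d, r ^ J d :=
    hf (fun _ => r) (fun _ => hr.le) hrρ
  have hgs : Summable fun J : Fin N → ℕ => ‖g J‖ * ∏ d, r ^ J d :=
    hg (fun _ => r) (fun _ => hr.le) hrρ
  have hprod : ∀ J : Fin N → ℕ, (∏ d, r ^ J d) = r ^ (∑ d, J d) := fun J =>
    Finset.prod_pow_eq_pow_sum _ _ _
  have hsplit : ∀ (J K : Fin N → ℕ), K ≤ J →
      r ^ (∑ d, J d) = (∏ d, r ^ K d) * ∏ d, r ^ ((J - K) d) := by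
    intro J K hKJ
    rw [← Finset.prod_mul_distrib]
    rw [← hprod J]
    apply Finset.prod_congr rfl
    intro d _
    rw [← pow_add]
    congr 1
    have := Pi.le_def.mp hKJ d
    simp only [Pi.sub_apply]
    omega
  by_cases hA0 : α = 0 <;> by_cases hB0 : β = 0
  · -- both zero
    subst hA0; subst hB0
    rw [show ((0 : Fin N → ℝ) + 0) = 0 by simp]
    simp only [nagumoNorm, if_pos rfl]
    apply tsum_le_of_sum_le'
      (mul_nonneg (tsum_nonneg fun J => by positivity) (tsum_nonneg fun J => by positivity))
    intro S
    have key : ∑ J ∈ S, ‖coeffMul f g J‖ * r ^ (∑ d, J d)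
        ≤ ∑ J ∈ S, ∑ K ∈ Finset.Iic J,
            (‖f K‖ * ∏ d, r ^ K d) * (‖g (J - K)‖ * ∏ d, r ^ ((J - K) d)) := by
      apply Finset.sum_le_sum
      intro J _
      calc ‖coeffMul f g J‖ * r ^ (∑ d, J d)
          ≤ (∑ K ∈ Finset.Iic J, ‖f K‖ * ‖g (J - K)‖) * r ^ (∑ d, J d) :=
            mul_le_mul_of_nonneg_right (coeffMul_abs_le f g J) (by positivity)
        _ = ∑ K ∈ Finset.Iic J,
              (‖f K‖ * ∏ d, r ^ K d) * (‖g (J - K)‖ * ∏ d, r ^ ((J - K) d)) := by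
            rw [Finset.sum_mul]
            apply Finset.sum_congr rfl
            intro K hK
            rw [hsplit J K (Finset.mem_Iic.mp hK)]
            ring
    refine key.trans ?_
    have hdouble := double_sum_le_tsum_mul
      (fun J => ‖f J‖ * ∏ d, r ^ J d)
      (fun J => ‖g J‖ * ∏ d, r ^ J d)
      (fun J => by positivity) (fun J => by positivity) hfs hgs S
    calc ∑ J ∈ S, ∑ K ∈ Finset.Iic J,
          (‖f K‖ * ∏ d, r ^ K d) * (‖g (J - K)‖ * ∏ d, r ^ ((J - K) d))
        ≤ (∑' J : Fin N → ℕ, ‖f J‖ * ∏ d, r ^ J d) *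
            (∑' J : Fin N → ℕ, ‖g J‖ * ∏ d, r ^ J d) := hdouble
      _ = (∑' J : Fin N → ℕ, ‖f J‖ * r ^ (∑ d, J d)) *
            (∑' J : Fin N → ℕ, ‖g J‖ * r ^ (∑ d, J d)) := by
          rw [show (∑' J : Fin N → ℕ, ‖f J‖ * ∏ d, r ^ J d)
              = ∑' J : Fin N → ℕ, ‖f J‖ * r ^ (∑ d, J d) from
            tsum_congr fun J => by rw [hprod J]]
          rw [show (∑' J : Fin N → ℕ, ‖g J‖ * ∏ d, r ^ J d)
              = ∑' J : Fin N → ℕ, ‖g J‖ * r ^ (∑ d, J d) from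
            tsum_congr fun J => by rw [hprod J]]
  · -- α = 0, β ≠ 0
    subst hA0
    have h1β : ∀ d, 1 ≤ β d := hβ.resolve_right hB0
    rw [zero_add]
    simp only [nagumoNorm, if_pos rfl, if_neg hB0]
    have hgne := nagumoSet_nonempty h1β hs hr hgs
    have hmem := csInf_mem_nagumoSet h1β hr hgne
    apply csInf_le ⟨0, fun A hA => hA.1⟩
    constructor
    · exact mul_nonneg (tsum_nonneg fun J => by positivity) hmem.1
    · intro J
      have flip : ∑ K ∈ Finset.Iic J, ‖f K‖ * ‖g (J - K)‖
          = ∑ K ∈ Finset.Iic J, ‖g K‖ * ‖f (J - K)‖ := by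
        rw [show (fun K => ‖f K‖ * ‖g (J - K)‖)
            = fun K => (fun K' K'' => ‖g K'‖ * ‖f K''‖) (J - K) K by
          funext K; exact mul_comm _ _]
        exact (sum_Iic_reflect J fun K' K'' => ‖g K'‖ * ‖f K''‖).symm ▸ rfl
      have hmix := nagumo_mixed g f h1β hs hr hmem hfs J
      calc ‖coeffMul f g J‖
          ≤ ∑ K ∈ Finset.Iic J, ‖f K‖ * ‖g (J - K)‖ :=
            coeffMul_abs_le f g J
        _ = ∑ K ∈ Finset.Iic J, ‖g K‖ * ‖f (J - K)‖ := flip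
        _ ≤ (sInf (nagumoSet g β r s) * ∑' L : Fin N → ℕ, ‖f L‖ * ∏ d, r ^ L d) *
              ∏ d, r ^ (-(β d)) * genBinom (β d) (J d) ^ s d * (r ^ J d)⁻¹ := hmix
        _ = ((∑' J : Fin N → ℕ, ‖f J‖ * r ^ (∑ d, J d)) * sInf (nagumoSet g β r s)) *
              ∏ d, r ^ (-(β d)) * genBinom (β d) (J d) ^ s d * (r ^ J d)⁻¹ := by
            rw [show (∑' L : Fin N → ℕ, ‖f L‖ * ∏ d, r ^ L d)
                = ∑' J : Fin N → ℕ, ‖f J‖ * r ^ (∑ d, J d) from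
              tsum_congr fun L => by rw [hprod L]]
            ring
  · -- α ≠ 0, β = 0
    subst hB0
    have h1α : ∀ d, 1 ≤ α d := hα.resolve_right hA0
    rw [add_zero]
    simp only [nagumoNorm, if_pos rfl, if_neg hA0]
    have hfne := nagumoSet_nonempty h1α hs hr hfs
    have hmem := csInf_mem_nagumoSet h1α hr hfne
    apply csInf_le ⟨0, fun A hA => hA.1⟩
    constructor
    · exact mul_nonneg hmem.1 (tsum_nonneg fun J => by positivity)
    · intro J
      have hmix := nagumo_mixed f g h1α hs hr hmem hgs J
      calc ‖coeffMul f g J‖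
          ≤ ∑ K ∈ Finset.Iic J, ‖f K‖ * ‖g (J - K)‖ :=
            coeffMul_abs_le f g J
        _ ≤ (sInf (nagumoSet f α r s) * ∑' L : Fin N → ℕ, ‖g L‖ * ∏ d, r ^ L d) *
              ∏ d, r ^ (-(α d)) * genBinom (α d) (J d) ^ s d * (r ^ J d)⁻¹ := hmix
        _ = (sInf (nagumoSet f α r s) * ∑' J : Fin N → ℕ, ‖g J‖ * r ^ (∑ d, J d)) *
              ∏ d, r ^ (-(α d)) * genBinom (α d) (J d) ^ s d * (r ^ J d)⁻¹ := by
            rw [show (∑' L : Fin N → ℕ, ‖g L‖ * ∏ d, r ^ L d)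
                = ∑' J : Fin N → ℕ, ‖g J‖ * r ^ (∑ d, J d) from
              tsum_congr fun L => by rw [hprod L]]
  · -- both nonzero
    have h1α : ∀ d, 1 ≤ α d := hα.resolve_right hA0
    have h1β : ∀ d, 1 ≤ β d := hβ.resolve_right hB0
    have hABne : α + β ≠ 0 := by
      obtain ⟨d0, hd0⟩ := Function.ne_iff.mp hA0
      intro h
      have := congrFun h d0
      simp only [Pi.add_apply, Pi.zero_apply] at this
      have := h1α d0
      have := h1β d0
      linarith
    simp only [nagumoNorm, if_neg hABne, if_neg hA0, if_neg hB0]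
    have hfne := nagumoSet_nonempty h1α hs hr hfs
    have hgne := nagumoSet_nonempty h1β hs hr hgs
    have hAf := csInf_mem_nagumoSet h1α hr hfne
    have hBg := csInf_mem_nagumoSet h1β hr hgne
    set Af := sInf (nagumoSet f α r s) with hAfdef
    set Bg := sInf (nagumoSet g β r s) with hBgdef
    apply csInf_le ⟨0, fun A hA => hA.1⟩
    constructor
    · exact mul_nonneg hAf.1 hBg.1
    · intro J
      have step2 : ∑ K ∈ Finset.Iic J, ‖f K‖ * ‖g (J - K)‖
          ≤ ∑ K ∈ Finset.Iic J,
              (Af * ∏ d, r ^ (-(α d)) * genBinom (α d) (K d) ^ s d * (r ^ K d)⁻¹) *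
              (Bg * ∏ d, r ^ (-(β d)) * genBinom (β d) ((J - K) d) ^ s d * (r ^ (J - K) d)⁻¹) := by
        apply Finset.sum_le_sum
        intro K _
        apply mul_le_mul (hAf.2 K) (hBg.2 (J - K)) (norm_nonneg _)
        exact mul_nonneg hAf.1 (Finset.prod_nonneg fun d _ =>
          (nagumo_fac_pos (by linarith [h1α d] : (0:ℝ) < α d) hr _).le)
      have step3 : ∑ K ∈ Finset.Iic J,
            (Af * ∏ d, r ^ (-(α d)) * genBinom (α d) (K d) ^ s d * (r ^ K d)⁻¹) *
            (Bg * ∏ d, r ^ (-(β d)) * genBinom (β d) ((J - K) d) ^ s d * (r ^ (J - K) d)⁻¹)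
          = (Af * Bg) * ∑ K ∈ Finset.Iic J, ∏ d,
              (r ^ (-(α d)) * genBinom (α d) (K d) ^ s d * (r ^ K d)⁻¹) *
              (r ^ (-(β d)) * genBinom (β d) (J d - K d) ^ s d * (r ^ (J d - K d))⁻¹) := by
        rw [Finset.mul_sum]
        apply Finset.sum_congr rfl
        intro K _
        have hsub2 : ∀ d, (J - K) d = J d - K d := fun d => rfl
        simp only [hsub2]
        conv_rhs => rw [Finset.prod_mul_distrib]
        ring
      have step4 : ∑ K ∈ Finset.Iic J, ∏ d,
            (r ^ (-(α d)) * genBinom (α d) (K d) ^ s d * (r ^ K d)⁻¹) *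
            (r ^ (-(β d)) * genBinom (β d) (J d - K d) ^ s d * (r ^ (J d - K d))⁻¹)
          = ∏ d, ∑ k ∈ Finset.Iic (J d),
            (r ^ (-(α d)) * genBinom (α d) k ^ s d * (r ^ k)⁻¹) *
            (r ^ (-(β d)) * genBinom (β d) (J d - k) ^ s d * (r ^ (J d - k))⁻¹) := by
        rw [Iic_pi_eq]
        exact (Finset.prod_univ_sum (fun d => Finset.Iic (J d))
          (fun d k => (r ^ (-(α d)) * genBinom (α d) k ^ s d * (r ^ k)⁻¹) *
            (r ^ (-(β d)) * genBinom (β d) (J d - k) ^ s d * (r ^ (J d - k))⁻¹))).symm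
      have step5 : ∏ d, (∑ k ∈ Finset.Iic (J d),
            (r ^ (-(α d)) * genBinom (α d) k ^ s d * (r ^ k)⁻¹) *
            (r ^ (-(β d)) * genBinom (β d) (J d - k) ^ s d * (r ^ (J d - k))⁻¹))
          ≤ ∏ d, r ^ (-(α d + β d)) * genBinom (α d + β d) (J d) ^ s d * (r ^ J d)⁻¹ := by
        apply Finset.prod_le_prod
        · intro d _
          apply Finset.sum_nonneg
          intro k _
          exact mul_nonneg (nagumo_fac_pos (by linarith [h1α d] : (0:ℝ) < α d) hr _).le
            (nagumo_fac_pos (by linarith [h1β d] : (0:ℝ) < β d) hr _).le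
        · intro d _
          rw [Iic_nat_eq_range]
          exact nagumo_dim1 (h1α d) (h1β d) (hs d) hr (J d)
      calc ‖coeffMul f g J‖
          ≤ ∑ K ∈ Finset.Iic J, ‖f K‖ * ‖g (J - K)‖ :=
            coeffMul_abs_le f g J
        _ ≤ ∑ K ∈ Finset.Iic J,
              (Af * ∏ d, r ^ (-(α d)) * genBinom (α d) (K d) ^ s d * (r ^ K d)⁻¹) *
              (Bg * ∏ d, r ^ (-(β d)) * genBinom (β d) ((J - K) d) ^ s d * (r ^ (J - K) d)⁻¹) :=
            step2
        _ = (Af * Bg) * ∑ K ∈ Finset.Iic J, ∏ d,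
              (r ^ (-(α d)) * genBinom (α d) (K d) ^ s d * (r ^ K d)⁻¹) *
              (r ^ (-(β d)) * genBinom (β d) (J d - K d) ^ s d * (r ^ (J d - K d))⁻¹) := step3
        _ = (Af * Bg) * ∏ d, ∑ k ∈ Finset.Iic (J d),
              (r ^ (-(α d)) * genBinom (α d) k ^ s d * (r ^ k)⁻¹) *
              (r ^ (-(β d)) * genBinom (β d) (J d - k) ^ s d * (r ^ (J d - k))⁻¹) := by
            rw [step4]
        _ ≤ (Af * Bg) * ∏ d, r ^ (-(α d + β d)) * genBinom (α d + β d) (J d) ^ s d * (r ^ J d)⁻¹ :=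
            mul_le_mul_of_nonneg_left step5 (mul_nonneg hAf.1 hBg.1)
        _ = (Af * Bg) * ∏ d, r ^ (-((α + β) d)) * genBinom ((α + β) d) (J d) ^ s d * (r ^ J d)⁻¹ := by
            rfl
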